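/- Let p be a prime with p ≡ 7 (mod 8). The pure quadratic double circulant code P_p(u, 1+ω, ω+uω) over F₄+uF₄, i.e. the row span of the p×2p matrix [ I_p | Q_p(u, 1+ω, ω+uω) ], is a self-dual code of length 2p over F₄+uF₄. -/

import Mathlib

noncomputable section

open Matrix
open scoped Classical

/-- The quadratic residue circulant matrix `Q_p(a,b,c)`: the `p × p` circulant matrix
(indexed by `ZMod p`) whose `(i,j)` entry is `a` if `j - i = 0`, `b` if `j - i` is a
nonzero quadratic residue modulo `p`, and `c` if `j - i` is a quadratic non-residue. -/
def Qcirc {R : Type*} [CommRing R] (p : ℕ) (a b c : R) :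
    Matrix (ZMod p) (ZMod p) R :=
  Matrix.of fun i j =>
    if j - i = 0 then a else if IsSquare (j - i) then b else c

/-- The rows of the generator matrix `[ I_p | Q_p(a,b,c) ]` of the pure quadratic
double circulant code, as vectors of length `2p` indexed by `ZMod p ⊕ ZMod p`. -/
def pureQDCGen {R : Type*} [CommRing R] (p : ℕ) (a b c : R) :
    ZMod p → (ZMod p ⊕ ZMod p) → R := fun i =>
  Sum.elim (fun j => if i = j then 1 else 0) (fun j => Qcirc p a b c i j)

/-- The pure quadratic double circulant code `P_p(a,b,c)`: the row span of
`[ I_p | Q_p(a,b,c) ]`, a linear code of length `2p` over `R`. -/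
def pureQDC {R : Type*} [CommRing R] (p : ℕ) (a b c : R) :
    Submodule R ((ZMod p ⊕ ZMod p) → R) :=
  Submodule.span R (Set.range (pureQDCGen p a b c))

/-- The dual of a code `C ⊆ Rⁿ` with respect to the Euclidean inner product. -/
def dualSet {R ι : Type*} [CommRing R] [Fintype ι] (C : Set (ι → R)) : Set (ι → R) :=
  {x | ∀ y ∈ C, ∑ i, x i * y i = 0}

/-- The field `F₄` with four elements. -/
abbrev F4 := GaloisField 2 2

/-- The ring `F₄ + u F₄ = F₄[u]/(u²)`. -/
abbrev R4 := DualNumber F4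

namespace PureQDCAux

open Finset

/-! ### Integer-valued character sums -/

variable {p : ℕ} [Fact p.Prime]

private lemma chi_neg_one (h3 : p % 4 = 3) : quadraticChar (ZMod p) (-1) = -1 := by
  rw [quadraticChar_neg_one_iff_not_isSquare, ZMod.exists_sq_eq_neg_one_iff]
  simp [h3]

private lemma sum_shift {M : Type*} [AddCommMonoid M] (g : ZMod p → M) (e : ZMod p) :
    ∑ t : ZMod p, g (t + e) = ∑ t : ZMod p, g t :=
  Fintype.sum_equiv (Equiv.addRight e) _ _ (fun t => by simp)

private lemma sum_chi_shift (hp2 : p ≠ 2) (e : ZMod p) :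
    ∑ t : ZMod p, quadraticChar (ZMod p) (t + e) = 0 := by
  rw [sum_shift (fun s => quadraticChar (ZMod p) s) e]
  exact quadraticChar_sum_zero (by rw [ZMod.ringChar_zmod_n]; exact hp2)

private lemma sum_chi_sq :
    ∑ t : ZMod p, quadraticChar (ZMod p) t ^ 2 = (p : ℤ) - 1 := by
  have h1 : ∀ t : ZMod p, quadraticChar (ZMod p) t ^ 2 =
      1 - (if t = 0 then (1:ℤ) else 0) := by
    intro t
    by_cases ht : t = 0
    · simp [ht]
    · rw [quadraticChar_sq_one ht, if_neg ht, sub_zero]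
  rw [Finset.sum_congr rfl fun t _ => h1 t, Finset.sum_sub_distrib, Finset.sum_const,
    Finset.card_univ, ZMod.card, Finset.sum_ite_eq' univ (0 : ZMod p) (fun _ => (1:ℤ))]
  simp

private lemma sum_chi_shift_sq (e : ZMod p) :
    ∑ t : ZMod p, quadraticChar (ZMod p) (t + e) ^ 2 = (p : ℤ) - 1 := by
  rw [sum_shift (fun s => quadraticChar (ZMod p) s ^ 2) e]
  exact sum_chi_sq

private lemma sum_chi_sq_mul (hp2 : p ≠ 2) (e : ZMod p) :
    ∑ t : ZMod p, quadraticChar (ZMod p) t ^ 2 * quadraticChar (ZMod p) (t + e) =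
      - quadraticChar (ZMod p) e := by
  set χ := quadraticChar (ZMod p)
  have h1 : ∀ t : ZMod p, χ t ^ 2 * χ (t + e) =
      χ (t + e) - (if t = 0 then χ e else 0) := by
    intro t
    by_cases ht : t = 0
    · simp [ht, χ]
    · rw [quadraticChar_sq_one ht, if_neg ht, sub_zero, one_mul]
  rw [Finset.sum_congr rfl fun t _ => h1 t, Finset.sum_sub_distrib, sum_chi_shift hp2 e,
    Finset.sum_ite_eq' univ (0 : ZMod p) (fun _ => χ e)]
  simp

private lemma sum_chi_mul_sq (hp2 : p ≠ 2) (e : ZMod p) :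
    ∑ t : ZMod p, quadraticChar (ZMod p) t * quadraticChar (ZMod p) (t + e) ^ 2 =
      - quadraticChar (ZMod p) (-e) := by
  set χ := quadraticChar (ZMod p)
  have h1 : ∀ t : ZMod p, χ t * χ (t + e) ^ 2 =
      χ t - (if t = -e then χ (-e) else 0) := by
    intro t
    by_cases ht : t = -e
    · subst ht; simp [χ]
    · have hne : t + e ≠ 0 := fun h => ht (by linear_combination h)
      rw [quadraticChar_sq_one hne, if_neg ht, sub_zero, mul_one]
  rw [Finset.sum_congr rfl fun t _ => h1 t, Finset.sum_sub_distrib,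
    quadraticChar_sum_zero (by rw [ZMod.ringChar_zmod_n]; exact hp2),
    Finset.sum_ite_eq' univ (-e : ZMod p) (fun _ => χ (-e))]
  simp

private lemma sum_chi_mul (hp2 : p ≠ 2) {e : ZMod p} (he : e ≠ 0) :
    ∑ t : ZMod p, quadraticChar (ZMod p) t * quadraticChar (ZMod p) (t + e) = -1 := by
  set χ := quadraticChar (ZMod p) with hχ
  have hne : (-e : ZMod p) ≠ 0 := neg_ne_zero.mpr he
  have hsq : χ e * χ e = 1 := by
    have := quadraticChar_sq_one he
    rwa [pow_two] at this
  have h1 : ∀ x : ZMod p, χ (-e * x) * χ (-e * x + e) = χ (-1) * (χ x * χ (1 - x)) := by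
    intro x
    have hx1 : (-e * x : ZMod p) = -1 * e * x := by ring
    have hx2 : (-e * x + e : ZMod p) = e * (1 - x) := by ring
    rw [hx2, hx1, _root_.map_mul, _root_.map_mul, _root_.map_mul]
    linear_combination (χ (-1) * χ x * χ (1 - x)) * hsq
  have h2 : ∑ t : ZMod p, χ t * χ (t + e) = ∑ x : ZMod p, χ (-e * x) * χ (-e * x + e) :=
    (Fintype.sum_equiv (Equiv.mulLeft₀ (-e) hne) _ _ (fun x => by simp)).symm
  have hchine1 : χ ≠ 1 :=
    quadraticChar_ne_one (by rw [ZMod.ringChar_zmod_n]; exact hp2)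
  have hjac : jacobiSum χ χ = - χ (-1) := by
    have := jacobiSum_nontrivial_inv hchine1
    rwa [(quadraticChar_isQuadratic (ZMod p)).inv] at this
  have hsqm : χ (-1) * χ (-1) = 1 := by
    have := quadraticChar_sq_one (show (-1 : ZMod p) ≠ 0 from neg_ne_zero.mpr one_ne_zero)
    rwa [pow_two] at this
  calc ∑ t : ZMod p, χ t * χ (t + e) = ∑ x : ZMod p, χ (-e * x) * χ (-e * x + e) := h2
    _ = ∑ x : ZMod p, χ (-1) * (χ x * χ (1 - x)) := Finset.sum_congr rfl fun x _ => h1 x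
    _ = χ (-1) * jacobiSum χ χ := by rw [← Finset.mul_sum]; rfl
    _ = -1 := by rw [hjac]; linear_combination -hsqm

/-! ### Parity of residue-pair counts -/

private lemma card_res_odd (h7 : p % 8 = 7) :
    (univ.filter fun t : ZMod p => quadraticChar (ZMod p) t = 1).card % 2 = 1 := by
  have hp2 : p ≠ 2 := by omega
  set χ := quadraticChar (ZMod p)
  have key : 2 * ((univ.filter fun t : ZMod p => χ t = 1).card : ℤ) = (p : ℤ) - 1 := by
    rw [← Finset.sum_boole, Finset.mul_sum]
    have h1 : ∀ t : ZMod p, 2 * (if χ t = 1 then (1:ℤ) else 0) = χ t ^ 2 + χ t := by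
      intro t
      by_cases ht : t = 0
      · simp [ht, χ]
      · rcases quadraticChar_dichotomy ht with h | h <;> rw [h] <;> norm_num
    rw [Finset.sum_congr rfl fun t _ => h1 t, Finset.sum_add_distrib, sum_chi_sq,
      quadraticChar_sum_zero (by rw [ZMod.ringChar_zmod_n]; exact hp2), add_zero]
  have key2 : 2 * (univ.filter fun t : ZMod p => χ t = 1).card + 1 = p := by
    have : (2 * ((univ.filter fun t : ZMod p => χ t = 1).card : ℤ) + 1 : ℤ) = p := by
      linarith
    exact_mod_cast this
  omega

private lemma card_rr_odd (h7 : p % 8 = 7) {e : ZMod p} (he : e ≠ 0) :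
    (univ.filter fun t : ZMod p => quadraticChar (ZMod p) t = 1 ∧
      quadraticChar (ZMod p) (t + e) = 1).card % 2 = 1 := by
  have hp2 : p ≠ 2 := by omega
  have h3 : p % 4 = 3 := by omega
  set χ := quadraticChar (ZMod p) with hχdef
  have hchie : χ (-e) = - χ e := by
    have h : (-e : ZMod p) = -1 * e := by ring
    rw [h, _root_.map_mul, chi_neg_one h3, neg_one_mul]
  have key : 4 * ((univ.filter fun t : ZMod p => χ t = 1 ∧ χ (t + e) = 1).card : ℤ) =
      (p : ℤ) - 3 := by
    rw [← Finset.sum_boole, Finset.mul_sum]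
    have h1 : ∀ t : ZMod p, 4 * (if χ t = 1 ∧ χ (t + e) = 1 then (1:ℤ) else 0) =
        χ t ^ 2 + χ (t + e) ^ 2 + χ t * χ (t + e) + χ t ^ 2 * χ (t + e)
          + χ t * χ (t + e) ^ 2 - 1 := by
      intro t
      by_cases ht : t = 0
      · subst ht
        have h0 : χ (0 : ZMod p) = 0 := quadraticChar_zero
        rcases quadraticChar_dichotomy (show (0 : ZMod p) + e ≠ 0 by simpa using he)
          with h | h <;> rw [h0, h] <;> norm_num
      · by_cases hte : t + e = 0
        · rcases quadraticChar_dichotomy ht with h | h <;>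
            rw [hte, (quadraticChar_zero : χ 0 = 0), h] <;> norm_num
        · rcases quadraticChar_dichotomy ht with h | h <;>
            rcases quadraticChar_dichotomy hte with h' | h' <;>
            rw [h, h'] <;> norm_num
    rw [Finset.sum_congr rfl fun t _ => h1 t]
    simp only [Finset.sum_sub_distrib, Finset.sum_add_distrib]
    rw [sum_chi_sq, sum_chi_shift_sq e, sum_chi_mul hp2 he, sum_chi_sq_mul hp2 e,
      sum_chi_mul_sq hp2 e, hchie, Finset.sum_const, Finset.card_univ, ZMod.card]
    ring
  have key2 : 4 * (univ.filter fun t : ZMod p => χ t = 1 ∧ χ (t + e) = 1).card + 3 = p := by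
    have : (4 * ((univ.filter fun t : ZMod p => χ t = 1 ∧ χ (t + e) = 1).card : ℤ)
        + 3 : ℤ) = p := by linarith
    exact_mod_cast this
  omega

/-! ### Ring facts about `R4` -/

private lemma two_eq_zero : (2 : R4) = 0 := by
  have h : (2 : F4) = 0 := by
    have := CharP.cast_eq_zero F4 2
    exact_mod_cast this
  calc (2 : R4) = algebraMap F4 R4 (2 : F4) := by rw [map_ofNat]
  _ = 0 := by rw [h, map_zero]

private lemma natCast_odd {n : ℕ} (h : n % 2 = 1) : (n : R4) = 1 := by
  obtain ⟨k, hk⟩ : ∃ k, n = 2 * k + 1 := ⟨n / 2, by omega⟩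
  subst hk
  push_cast
  rw [two_eq_zero]
  ring

/-- The first-row function of the circulant matrix. -/
private def Qf (p : ℕ) (ω : R4) : ZMod p → R4 := fun t =>
  if t = 0 then DualNumber.eps else if IsSquare t then 1 + ω else ω + DualNumber.eps * ω

/-! ### The key sum -/

private lemma key_sum (h7 : p % 8 = 7) (ω : R4) (hω : ω ^ 2 + ω + 1 = 0) (e : ZMod p) :
    ∑ t : ZMod p, Qf p ω t * Qf p ω (t + e) = if e = 0 then 1 else 0 := by
  have hp2' : p ≠ 2 := by omega
  set χ := quadraticChar (ZMod p) with hχdef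
  set a : R4 := DualNumber.eps with ha
  set b : R4 := 1 + ω with hb
  set c : R4 := ω + DualNumber.eps * ω with hc
  have h2 : (2 : R4) = 0 := two_eq_zero
  have heps : (DualNumber.eps * DualNumber.eps : R4) = 0 := DualNumber.eps_mul_eps
  have hp1 : ((p : ℕ) : R4) = 1 := natCast_odd (by omega)
  set d0 : ZMod p → R4 := fun t => if t = 0 then 1 else 0 with hd0
  set q1 : ZMod p → R4 := fun t => if χ t = 1 then 1 else 0 with hq1
  have hdec : ∀ t : ZMod p, Qf p ω t = c + (a - c) * d0 t + (b - c) * q1 t := by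
    intro t
    by_cases ht : t = 0
    · have hq0 : ¬ (χ (0 : ZMod p) = 1) := by
        have h' : χ (0 : ZMod p) = 0 := quadraticChar_zero
        rw [h']; decide
      simp only [Qf, hd0, hq1, ht, eq_self_iff_true, if_true, if_neg hq0]
      ring
    · by_cases hs : IsSquare t
      · have hq : χ t = 1 := (quadraticChar_one_iff_isSquare ht).mpr hs
        simp only [Qf, hd0, hq1, if_neg ht, if_pos hs, hq, eq_self_iff_true, if_true]
        ring
      · have hq : χ t ≠ 1 := by
          have : χ t = -1 := quadraticChar_neg_one_iff_not_isSquare.mpr hs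
          rw [this]; decide
        simp only [Qf, hd0, hq1, if_neg ht, if_neg hs, if_neg hq]
        ring
  -- individual sums
  have hS2 : ∑ t : ZMod p, d0 (t + e) = 1 := by
    have h' : ∀ t : ZMod p, d0 (t + e) = if t = -e then (1:R4) else 0 := by
      intro t
      by_cases h : t = -e
      · subst h; simp [hd0]
      · have hne : t + e ≠ 0 := fun hh => h (by linear_combination hh)
        simp [hd0, hne, h]
    rw [Finset.sum_congr rfl fun t _ => h' t,
      Finset.sum_ite_eq' univ (-e : ZMod p) (fun _ => (1:R4))]
    simp
  have hS4 : ∑ t : ZMod p, d0 t = 1 := by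
    rw [hd0, Finset.sum_ite_eq' univ (0 : ZMod p) (fun _ => (1:R4))]
    simp
  have hS7 : ∑ t : ZMod p, q1 t = 1 := by
    rw [hq1, Finset.sum_boole]
    exact natCast_odd (card_res_odd h7)
  have hS3 : ∑ t : ZMod p, q1 (t + e) = 1 := by
    rw [sum_shift q1 e]; exact hS7
  have hS5 : ∑ t : ZMod p, d0 t * d0 (t + e) = if e = 0 then 1 else 0 := by
    have h' : ∀ t : ZMod p, d0 t * d0 (t + e) = if t = 0 then d0 e else 0 := by
      intro t
      by_cases h : t = 0
      · subst h; simp [hd0]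
      · simp [hd0, h]
    rw [Finset.sum_congr rfl fun t _ => h' t,
      Finset.sum_ite_eq' univ (0 : ZMod p) (fun _ => d0 e)]
    simp [hd0]
  have hS6 : ∑ t : ZMod p, d0 t * q1 (t + e) = q1 e := by
    have h' : ∀ t : ZMod p, d0 t * q1 (t + e) = if t = 0 then q1 e else 0 := by
      intro t
      by_cases h : t = 0
      · subst h; simp [hd0]
      · simp [hd0, h]
    rw [Finset.sum_congr rfl fun t _ => h' t,
      Finset.sum_ite_eq' univ (0 : ZMod p) (fun _ => q1 e)]
    simp
  have hS8 : ∑ t : ZMod p, q1 t * d0 (t + e) = q1 (-e) := by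
    have h' : ∀ t : ZMod p, q1 t * d0 (t + e) = if t = -e then q1 (-e) else 0 := by
      intro t
      by_cases h : t = -e
      · subst h; simp [hd0]
      · have hne : t + e ≠ 0 := fun hh => h (by linear_combination hh)
        simp [hd0, hne, h]
    rw [Finset.sum_congr rfl fun t _ => h' t,
      Finset.sum_ite_eq' univ (-e : ZMod p) (fun _ => q1 (-e))]
    simp
  have hS9 : ∑ t : ZMod p, q1 t * q1 (t + e) = 1 := by
    by_cases he : e = 0
    · subst he
      have h' : ∀ t : ZMod p, q1 t * q1 (t + 0) = q1 t := by
        intro t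
        by_cases h : χ t = 1 <;> simp [hq1, h]
      rw [Finset.sum_congr rfl fun t _ => h' t]; exact hS7
    · have h' : ∀ t : ZMod p, q1 t * q1 (t + e) =
          if χ t = 1 ∧ χ (t + e) = 1 then (1:R4) else 0 := by
        intro t
        by_cases h : χ t = 1 <;> by_cases h'' : χ (t + e) = 1 <;> simp [hq1, h, h'']
      rw [Finset.sum_congr rfl fun t _ => h' t, Finset.sum_boole]
      exact natCast_odd (card_rr_odd h7 he)
  -- expansion
  have expand : ∀ t : ZMod p, Qf p ω t * Qf p ω (t + e) =
      c * c + (c * (a - c)) * d0 (t + e) + (c * (b - c)) * q1 (t + e)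
        + ((a - c) * c) * d0 t + ((a - c) * (a - c)) * (d0 t * d0 (t + e))
        + ((a - c) * (b - c)) * (d0 t * q1 (t + e)) + ((b - c) * c) * q1 t
        + ((b - c) * (a - c)) * (q1 t * d0 (t + e))
        + ((b - c) * (b - c)) * (q1 t * q1 (t + e)) := by
    intro t
    rw [hdec t, hdec (t + e)]
    ring
  rw [Finset.sum_congr rfl fun t _ => expand t]
  simp only [Finset.sum_add_distrib, ← Finset.mul_sum, Finset.sum_const, Finset.card_univ,
    ZMod.card, nsmul_eq_mul]
  rw [hp1, hS2, hS3, hS4, hS5, hS6, hS7, hS8, hS9]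
  by_cases he : e = 0
  · subst he
    have hq10 : q1 (0 : ZMod p) = 0 := by
      have h' : χ (0 : ZMod p) = 0 := quadraticChar_zero
      simp [hq1, h']
    rw [neg_zero, hq10]
    rw [ha, hb, hc]
    simp only [eq_self_iff_true, if_true]
    linear_combination (-2 * DualNumber.eps - DualNumber.eps ^ 2) * hω
      + (ω + DualNumber.eps + DualNumber.eps * ω) * h2 + (2 + ω) * heps
  · have hq : ((a - c) * (b - c)) * q1 e + ((b - c) * (a - c)) * q1 (-e)
        = (a - c) * (b - c) := by
      have hchie : χ (-e) = - χ e := by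
        have h' : (-e : ZMod p) = -1 * e := by ring
        rw [h', _root_.map_mul, chi_neg_one (by omega), neg_one_mul]
      rcases quadraticChar_dichotomy he with h | h
      · have h1' : q1 e = 1 := by simp [hq1, (show χ e = 1 from h)]
        have h2' : q1 (-e) = 0 := by
          have : χ (-e) = -1 := by rw [hchie, h]
          simp only [hq1, this]
          norm_num
        rw [h1', h2']; ring
      · have h1' : q1 e = 0 := by
          simp only [hq1, (show χ e = -1 from h)]
          norm_num
        have h2' : q1 (-e) = 1 := by
          have : χ (-e) = 1 := by rw [hchie, h]; ring
          simp [hq1, this]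
        rw [h1', h2']; ring
    simp only [if_neg he]
    rw [ha, hb, hc] at hq ⊢
    linear_combination hq + (-1 - 3 * DualNumber.eps - DualNumber.eps ^ 2) * hω
      + (1 + ω + 2 * DualNumber.eps + 2 * DualNumber.eps * ω) * h2
      + (1 + 2 * ω) * heps


/-! ### Matrix identities -/

private def Qm (p : ℕ) (ω : R4) : Matrix (ZMod p) (ZMod p) R4 :=
  Qcirc p (DualNumber.eps : R4) (1 + ω) (ω + DualNumber.eps * ω)

private def Gv (p : ℕ) (ω : R4) : ZMod p → (ZMod p ⊕ ZMod p) → R4 :=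
  pureQDCGen p (DualNumber.eps : R4) (1 + ω) (ω + DualNumber.eps * ω)

private lemma Qm_apply (ω : R4) (i j : ZMod p) : Qm p ω i j = Qf p ω (j - i) := rfl

private lemma Gv_inl (ω : R4) (i j : ZMod p) :
    Gv p ω i (Sum.inl j) = if i = j then 1 else 0 := rfl

private lemma Gv_inr (ω : R4) (i j : ZMod p) : Gv p ω i (Sum.inr j) = Qm p ω i j := rfl

private lemma QQt (h7 : p % 8 = 7) (ω : R4) (hω : ω ^ 2 + ω + 1 = 0) (i k : ZMod p) :
    ∑ j : ZMod p, Qm p ω i j * Qm p ω k j = if i = k then 1 else 0 := by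
  calc ∑ j : ZMod p, Qm p ω i j * Qm p ω k j
      = ∑ j : ZMod p, Qf p ω (j - i) * Qf p ω ((j - i) + (i - k)) := by
        refine Finset.sum_congr rfl fun j _ => ?_
        rw [Qm_apply, Qm_apply]
        have harg : j - k = (j - i) + (i - k) := by ring
        rw [harg]
    _ = ∑ t : ZMod p, Qf p ω t * Qf p ω (t + (i - k)) :=
        Fintype.sum_equiv (Equiv.subRight i) _ _ (fun j => by simp)
    _ = if i - k = 0 then 1 else 0 := key_sum h7 ω hω (i - k)
    _ = if i = k then 1 else 0 := by simp [sub_eq_zero]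

private lemma QtQ (h7 : p % 8 = 7) (ω : R4) (hω : ω ^ 2 + ω + 1 = 0) (m j : ZMod p) :
    ∑ i : ZMod p, Qm p ω i m * Qm p ω i j = if m = j then 1 else 0 := by
  have h1 : Qm p ω * (Qm p ω)ᵀ = 1 := by
    apply Matrix.ext
    intro i k
    rw [Matrix.mul_apply]
    simp only [Matrix.transpose_apply]
    rw [Matrix.one_apply]
    exact QQt h7 ω hω i k
  have h2 : (Qm p ω)ᵀ * Qm p ω = 1 := mul_eq_one_comm.mp h1
  have h3 : ((Qm p ω)ᵀ * Qm p ω) m j = (1 : Matrix (ZMod p) (ZMod p) R4) m j := by rw [h2]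
  rw [Matrix.mul_apply] at h3
  simp only [Matrix.transpose_apply] at h3
  rwa [Matrix.one_apply] at h3

/-! ### Inner products and components -/

private lemma inner_gen (ω : R4) (x : (ZMod p ⊕ ZMod p) → R4) (i : ZMod p) :
    ∑ z, x z * Gv p ω i z = x (Sum.inl i) + ∑ j, x (Sum.inr j) * Qm p ω i j := by
  rw [Fintype.sum_sum_type]
  congr 1
  have h' : ∀ j : ZMod p, x (Sum.inl j) * Gv p ω i (Sum.inl j) =
      if j = i then x (Sum.inl j) else 0 := by
    intro j
    rw [Gv_inl]
    by_cases h : i = j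
    · subst h; simp
    · simp [h, Ne.symm h]
  rw [Finset.sum_congr rfl fun j _ => h' j,
    Finset.sum_ite_eq' Finset.univ i (fun j => x (Sum.inl j))]
  simp

private lemma comp_inl (ω : R4) (cf : ZMod p → R4) (i : ZMod p) :
    (∑ k, cf k • Gv p ω k) (Sum.inl i) = cf i := by
  rw [Finset.sum_apply]
  have h' : ∀ k : ZMod p, (cf k • Gv p ω k) (Sum.inl i) = if k = i then cf k else 0 := by
    intro k
    rw [Pi.smul_apply, smul_eq_mul, Gv_inl]
    by_cases h : k = i
    · subst h; simp
    · simp [h]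
  rw [Finset.sum_congr rfl fun k _ => h' k,
    Finset.sum_ite_eq' Finset.univ i (fun k => cf k)]
  simp

private lemma comp_inr (ω : R4) (cf : ZMod p → R4) (j : ZMod p) :
    (∑ k, cf k • Gv p ω k) (Sum.inr j) = ∑ k, cf k * Qm p ω k j := by
  rw [Finset.sum_apply]
  refine Finset.sum_congr rfl fun k _ => ?_
  rw [Pi.smul_apply, smul_eq_mul, Gv_inr]

/-! ### The two set identities -/

private lemma span_eq (h7 : p % 8 = 7) (ω : R4) (hω : ω ^ 2 + ω + 1 = 0) :
    (pureQDC p (DualNumber.eps : R4) (1 + ω) (ω + DualNumber.eps * ω) :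
        Set ((ZMod p ⊕ ZMod p) → R4)) =
      {x | ∀ i, x (Sum.inl i) + ∑ j, x (Sum.inr j) * Qm p ω i j = 0} := by
  have h2 : (2 : R4) = 0 := two_eq_zero
  have hx2 : ∀ x : R4, x + x = 0 := fun x => by rw [← two_mul, h2, zero_mul]
  ext x
  simp only [Set.mem_setOf_eq, SetLike.mem_coe]
  constructor
  · intro hx
    obtain ⟨cf, rfl⟩ := (Submodule.mem_span_range_iff_exists_fun R4).mp hx
    intro i
    rw [show pureQDCGen p (DualNumber.eps : R4) (1 + ω) (ω + DualNumber.eps * ω)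
      = Gv p ω from rfl]
    rw [comp_inl]
    have hr : ∀ j : ZMod p, (∑ k, cf k • Gv p ω k) (Sum.inr j) * Qm p ω i j =
        (∑ k, cf k * Qm p ω k j) * Qm p ω i j := fun j => by rw [comp_inr]
    rw [Finset.sum_congr rfl fun j _ => hr j]
    have hswap : ∑ j, (∑ k, cf k * Qm p ω k j) * Qm p ω i j = cf i := by
      calc ∑ j, (∑ k, cf k * Qm p ω k j) * Qm p ω i j
          = ∑ j, ∑ k, cf k * (Qm p ω k j * Qm p ω i j) := by
            refine Finset.sum_congr rfl fun j _ => ?_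
            rw [Finset.sum_mul]
            exact Finset.sum_congr rfl fun k _ => by ring
        _ = ∑ k, ∑ j, cf k * (Qm p ω k j * Qm p ω i j) := Finset.sum_comm
        _ = ∑ k, cf k * (if k = i then 1 else 0) := by
            refine Finset.sum_congr rfl fun k _ => ?_
            rw [← Finset.mul_sum, QQt h7 ω hω k i]
        _ = ∑ k, (if k = i then cf k else 0) := by
            refine Finset.sum_congr rfl fun k _ => ?_
            by_cases h : k = i
            · subst h; simp
            · simp [h]
        _ = cf i := by
            rw [Finset.sum_ite_eq' Finset.univ i (fun k => cf k)]
            simp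
    rw [hswap]
    exact hx2 (cf i)
  · intro hx
    refine (Submodule.mem_span_range_iff_exists_fun R4).mpr ⟨fun i => x (Sum.inl i), ?_⟩
    have hval : ∀ k, x (Sum.inl k) = ∑ m, x (Sum.inr m) * Qm p ω k m := by
      intro k
      have h := hx k
      linear_combination h - hx2 (∑ m, x (Sum.inr m) * Qm p ω k m)
    rw [show pureQDCGen p (DualNumber.eps : R4) (1 + ω) (ω + DualNumber.eps * ω)
      = Gv p ω from rfl]
    funext z
    cases z with
    | inl i => rw [comp_inl]
    | inr j =>
      rw [comp_inr]
      calc ∑ k, x (Sum.inl k) * Qm p ω k j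
          = ∑ k, (∑ m, x (Sum.inr m) * Qm p ω k m) * Qm p ω k j :=
            Finset.sum_congr rfl fun k _ => by rw [← hval k]
        _ = ∑ k, ∑ m, x (Sum.inr m) * (Qm p ω k m * Qm p ω k j) := by
            refine Finset.sum_congr rfl fun k _ => ?_
            rw [Finset.sum_mul]
            exact Finset.sum_congr rfl fun m _ => by ring
        _ = ∑ m, ∑ k, x (Sum.inr m) * (Qm p ω k m * Qm p ω k j) := Finset.sum_comm
        _ = ∑ m, x (Sum.inr m) * (if m = j then 1 else 0) := by
            refine Finset.sum_congr rfl fun m _ => ?_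
            rw [← Finset.mul_sum, QtQ h7 ω hω m j]
        _ = ∑ m, (if m = j then x (Sum.inr m) else 0) := by
            refine Finset.sum_congr rfl fun m _ => ?_
            by_cases h : m = j
            · subst h; simp
            · simp [h]
        _ = x (Sum.inr j) := by
            rw [Finset.sum_ite_eq' Finset.univ j (fun m => x (Sum.inr m))]
            simp

private lemma dual_eq (ω : R4) :
    dualSet (pureQDC p (DualNumber.eps : R4) (1 + ω) (ω + DualNumber.eps * ω) :
        Set ((ZMod p ⊕ ZMod p) → R4)) =
      {x | ∀ i, x (Sum.inl i) + ∑ j, x (Sum.inr j) * Qm p ω i j = 0} := by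
  ext x
  simp only [dualSet, Set.mem_setOf_eq]
  constructor
  · intro hx i
    have h := hx (Gv p ω i) (Submodule.subset_span ⟨i, rfl⟩)
    rwa [inner_gen ω x i] at h
  · intro hx y hy
    let φ : ((ZMod p ⊕ ZMod p) → R4) →ₗ[R4] R4 :=
      { toFun := fun z => ∑ i, x i * z i
        map_add' := fun y z => by
          simp only [Pi.add_apply, mul_add]
          rw [Finset.sum_add_distrib]
        map_smul' := fun r z => by
          simp only [Pi.smul_apply, smul_eq_mul, RingHom.id_apply]
          rw [Finset.mul_sum]
          exact Finset.sum_congr rfl fun i _ => by ring }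
    have hle : pureQDC p (DualNumber.eps : R4) (1 + ω) (ω + DualNumber.eps * ω) ≤
        LinearMap.ker φ := by
      rw [pureQDC, Submodule.span_le]
      rintro _ ⟨i, rfl⟩
      have h := hx i
      rw [SetLike.mem_coe, LinearMap.mem_ker]
      show ∑ z, x z * Gv p ω i z = 0
      rw [inner_gen ω x i]
      exact h
    exact hle hy

end PureQDCAux


/-- For a prime `p ≡ 7 (mod 8)` and `ω` a root of `x² + x + 1` in `F₄ + u F₄`
(necessarily `ω ∈ F₄`), the pure quadratic double circulant code
`P_p(u, 1 + ω, ω + uω)` over `F₄ + u F₄` is self-dual of length `2p`. -/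
theorem pureQDC_self_dual_of_mod_eight_eq_seven
    (p : ℕ) [NeZero p] (hp : Nat.Prime p) (h7 : p % 8 = 7)
    (ω : R4) (hω : ω ^ 2 + ω + 1 = 0) :
    (pureQDC p (DualNumber.eps : R4) (1 + ω) (ω + DualNumber.eps * ω) :
        Set ((ZMod p ⊕ ZMod p) → R4)) =
      dualSet (pureQDC p (DualNumber.eps : R4) (1 + ω) (ω + DualNumber.eps * ω) :
        Set ((ZMod p ⊕ ZMod p) → R4)) := by
  haveI : Fact p.Prime := ⟨hp⟩
  rw [PureQDCAux.dual_eq ω, PureQDCAux.span_eq h7 ω hω]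

end
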